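/- If p is a convex combination p = ∑_{j=1}^k α_j q^{(j)} of product distributions q^{(j)} on {0,1}^n (α_j ≥ 0, ∑ α_j = 1), and x is a strong mode of p (i.e., p(x) > ∑_{y: d_H(x,y)=1} p(y)), then x is a mode of at least one mixture component q^{(j)} with α_j > 0. -/
import Mathlib


/-- If `p = ∑ j, α j • q j` is a convex combination of product distributions on `{0,1}^n`
and `x` is a strong mode of `p`, then `x` is a mode of some component `q j` with `α j > 0`. -/
theorem strong_mode_is_mode_of_component
    (n k : ℕ) (α : Fin k → ℝ) (hα0 : ∀ j, 0 ≤ α j) (hα1 : ∑ j, α j = 1)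
    (q : Fin k → (Fin n → Bool) → ℝ)
    (hq : ∀ j, ∃ f : Fin n → Bool → ℝ, (∀ i b, 0 ≤ f i b) ∧
      (∀ i, f i false + f i true = 1) ∧ ∀ x, q j x = ∏ i, f i (x i))
    (p : (Fin n → Bool) → ℝ) (hp : ∀ x, p x = ∑ j, α j * q j x)
    (x : Fin n → Bool)
    (hx : ∑ y ∈ Finset.univ.filter (fun y => hammingDist x y = 1), p y < p x) :
    ∃ j, 0 < α j ∧ ∀ y, hammingDist x y = 1 → q j y < q j x := by
  by_contra hcon
  push_neg at hcon
  -- q j is nonnegative everywhere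
  have hqnn : ∀ j y, 0 ≤ q j y := by
    intro j y
    obtain ⟨f, hf0, _, hfprod⟩ := hq j
    rw [hfprod]
    exact Finset.prod_nonneg fun i _ => hf0 i (y i)
  set S := Finset.univ.filter (fun y => hammingDist x y = 1) with hS
  have key : ∀ j, α j * q j x ≤ α j * ∑ y ∈ S, q j y := by
    intro j
    rcases eq_or_lt_of_le (hα0 j) with h0 | h0
    · rw [← h0]; simp
    · obtain ⟨y, hy1, hy2⟩ := hcon j h0
      have hyS : y ∈ S := by simp [hS, hy1]
      have : q j x ≤ ∑ y ∈ S, q j y :=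
        hy2.trans (Finset.single_le_sum (fun z _ => hqnn j z) hyS)
      exact mul_le_mul_of_nonneg_left this (hα0 j)
  have : p x ≤ ∑ y ∈ S, p y := by
    calc p x = ∑ j, α j * q j x := hp x
    _ ≤ ∑ j, α j * ∑ y ∈ S, q j y := Finset.sum_le_sum fun j _ => key j
    _ = ∑ j, ∑ y ∈ S, α j * q j y := by
        simp [Finset.mul_sum]
    _ = ∑ y ∈ S, ∑ j, α j * q j y := Finset.sum_comm
    _ = ∑ y ∈ S, p y := by simp [hp]
  linarith
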